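/- Let B : (0, ∞) → ℂ be measurable such that t ↦ e^{−λt} B(t) is integrable on (0, ∞) for every real λ > 0. Let (α_j)_{j≥0} be a strictly increasing sequence of real numbers with α_0 > −1, let (β_j)_{j≥0} be nonnegative integers and (b_j)_{j≥0} complex numbers, and assume that for every N ≥ 0 there exist constants C_N, δ_N > 0 with |B(t) − Σ_{j<N} b_j t^{α_j} (log t)^{β_j}| ≤ C_N · t^{α_N} |log t|^{β_N} for all 0 < t < δ_N. Then for every N ≥ 0, as λ → +∞ through the reals, ∫₀^∞ e^{−λt} B(t) dt = Σ_{j<N} b_j · D^{β_j}[a ↦ Γ(a+1) λ^{−a−1}](α_j) + O(λ^{−α_N−1} (log λ)^{β_N}), where D^{β}[·](α) denotes the β-th complex derivative at a = α and λ^{−a−1} = exp(−(a+1) log λ). -/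

import Mathlib

open MeasureTheory Asymptotics Filter Set Topology

lemma logpow_bigO_zero (k : ℕ) {b : ℝ} (hb : 0 < b) :
    (fun t : ℝ => (|Real.log t| + 1) ^ k) =O[𝓝[>] (0:ℝ)] (· ^ (-b)) := by
  set r : ℝ := b / (k + 1) with hr
  have hr0 : 0 < r := div_pos hb (by positivity)
  have hp : Tendsto (fun t : ℝ => t ^ r) (𝓝[>] (0:ℝ)) (𝓝 0) := by
    have h := (Real.continuousAt_rpow_const 0 r (Or.inr hr0.le)).continuousWithinAt
      (s := Ioi (0:ℝ))
    simpa [ContinuousWithinAt, Real.zero_rpow hr0.ne'] using h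
  have h1 : Tendsto (fun t : ℝ => (|Real.log t| + 1) * t ^ r) (𝓝[>] (0:ℝ)) (𝓝 0) := by
    have hl : Tendsto (fun t : ℝ => |Real.log t| * t ^ r) (𝓝[>] (0:ℝ)) (𝓝 0) := by
      have h2 := (tendsto_log_mul_rpow_nhdsGT_zero hr0).abs
      simp only [abs_zero] at h2
      refine h2.congr' ?_
      filter_upwards [self_mem_nhdsWithin] with t ht
      rw [abs_mul, abs_of_nonneg (Real.rpow_nonneg (le_of_lt ht) r)]
    have h3 := hl.add hp
    simp only [add_zero, zero_add] at h3
    refine h3.congr fun t => by ring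
  -- so (|log t|+1) =O t^(-r), then pow
  have h2 : (fun t : ℝ => |Real.log t| + 1) =O[𝓝[>] (0:ℝ)] (· ^ (-r)) := by
    refine (h1.isBigO_one ℝ).mul (isBigO_refl (· ^ (-r)) _) |>.congr' ?_ (by simp)
    filter_upwards [self_mem_nhdsWithin] with t (ht : 0 < t)
    simp [mul_assoc, ← Real.rpow_add ht]
  have h3 := h2.pow k
  refine h3.trans ?_
  -- t^(-r) ^ k = t^(-r*k) ≤ t^(-b) near 0
  rw [isBigO_iff]
  refine ⟨1, ?_⟩
  filter_upwards [Ioo_mem_nhdsGT (by norm_num : (0:ℝ) < 1)] with t ht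
  obtain ⟨ht0, ht1⟩ := ht
  rw [one_mul, ← Real.rpow_natCast (t ^ (-r)) k, ← Real.rpow_mul ht0.le]
  rw [Real.norm_eq_abs, Real.norm_eq_abs, abs_of_nonneg (Real.rpow_nonneg ht0.le _),
    abs_of_nonneg (Real.rpow_nonneg ht0.le _)]
  apply Real.rpow_le_rpow_of_exponent_ge ht0 ht1.le
  rw [hr]
  rw [neg_mul, neg_le_neg_iff, div_mul_eq_mul_div, div_le_iff₀ (by positivity)]
  have : (k:ℝ) ≤ k + 1 := by linarith
  nlinarith [hb.le, hb]

lemma logpow_exp_bigO_top (k : ℕ) {lam : ℝ} (hlam : 0 < lam) (a : ℝ) :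
    (fun t : ℝ => (|Real.log t| + 1) ^ k * Real.exp (-(lam * t))) =O[atTop]
      (· ^ (-a)) := by
  have h1 : (fun t : ℝ => (|Real.log t| + 1) ^ k) =O[atTop] (fun t : ℝ => t ^ (k:ℝ)) := by
    rw [isBigO_iff]
    refine ⟨2 ^ k, ?_⟩
    filter_upwards [eventually_ge_atTop (1:ℝ)] with t ht
    have h0 : (0:ℝ) ≤ Real.log t := Real.log_nonneg ht
    have hlt : Real.log t ≤ t := (Real.log_le_sub_one_of_pos (by linarith)).trans (by linarith)
    rw [Real.norm_eq_abs, Real.norm_eq_abs, abs_of_nonneg (by positivity),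
      abs_of_nonneg (Real.rpow_nonneg (by linarith) _), Real.rpow_natCast, ← mul_pow]
    apply pow_le_pow_left₀ (by positivity)
    rw [abs_of_nonneg h0]; nlinarith
  have h2 : (fun t : ℝ => Real.exp (-(lam * t))) =O[atTop] (fun t : ℝ => t ^ (-a - k)) := by
    have := (isLittleO_exp_neg_mul_rpow_atTop hlam (-a - k)).isBigO
    simpa [neg_mul] using this
  refine (h1.mul h2).congr' (EventuallyEq.refl _ _) ?_
  filter_upwards [eventually_gt_atTop (0:ℝ)] with t ht
  rw [← Real.rpow_add ht]; ring_nf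

noncomputable def wfun (lam : ℝ) (k : ℕ) : ℝ → ℂ :=
  fun t => (Real.log t : ℂ) ^ k * Complex.exp (-(lam : ℂ) * t)

lemma wfun_norm (lam : ℝ) (k : ℕ) (t : ℝ) :
    ‖wfun lam k t‖ = |Real.log t| ^ k * Real.exp (-(lam * t)) := by
  simp only [wfun, norm_mul, norm_pow, Complex.norm_real, Real.norm_eq_abs,
    Complex.norm_exp]
  congr 1
  simp [neg_mul]

lemma wfun_bigO_top (k : ℕ) {lam : ℝ} (hlam : 0 < lam) (a : ℝ) :
    (wfun lam k) =O[atTop] (· ^ (-a)) := by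
  refine IsBigO.trans ?_ (logpow_exp_bigO_top k hlam a)
  refine isBigO_of_le _ fun t => ?_
  rw [wfun_norm, Real.norm_eq_abs]
  have h1 : |Real.log t| ^ k * Real.exp (-(lam * t)) ≤
      (|Real.log t| + 1) ^ k * Real.exp (-(lam * t)) := by
    apply mul_le_mul_of_nonneg_right _ (Real.exp_nonneg _)
    exact pow_le_pow_left₀ (abs_nonneg _) (by linarith) k
  exact h1.trans (le_abs_self _)

lemma wfun_bigO_zero (k : ℕ) {lam : ℝ} (hlam : 0 < lam) {b : ℝ} (hb : 0 < b) :
    (wfun lam k) =O[𝓝[>] (0:ℝ)] (· ^ (-b)) := by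
  refine IsBigO.trans ?_ (logpow_bigO_zero k hb)
  rw [isBigO_iff]
  refine ⟨1, ?_⟩
  filter_upwards [self_mem_nhdsWithin] with t (ht : 0 < t)
  rw [wfun_norm, Real.norm_eq_abs, one_mul]
  have h2 : Real.exp (-(lam * t)) ≤ 1 := by
    rw [Real.exp_le_one_iff]; nlinarith
  have := mul_le_mul_of_nonneg_left h2 (pow_nonneg (abs_nonneg (Real.log t)) k)
  rw [mul_one] at this
  refine this.trans (le_trans ?_ (le_abs_self _))
  exact pow_le_pow_left₀ (abs_nonneg _) (by linarith) k

lemma wfun_locInt (lam : ℝ) (k : ℕ) : LocallyIntegrableOn (wfun lam k) (Ioi 0) := by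
  apply ContinuousOn.locallyIntegrableOn _ measurableSet_Ioi
  apply ContinuousOn.mul
  · apply ContinuousOn.pow
    exact Complex.continuous_ofReal.comp_continuousOn
      (Real.continuousOn_log.mono fun t ht => ne_of_gt ht)
  · exact (Complex.continuous_exp.comp (by continuity)).continuousOn

lemma wfun_mellinConv {lam : ℝ} (hlam : 0 < lam) (k : ℕ) {s : ℂ} (hs : 0 < s.re) :
    MellinConvergent (wfun lam k) s :=
  mellinConvergent_of_isBigO_rpow (wfun_locInt lam k) (wfun_bigO_top k hlam (s.re + 1))
    (lt_add_one _) (wfun_bigO_zero k hlam (half_pos hs)) (half_lt_self hs)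

lemma wfun_hasDerivAt {lam : ℝ} (hlam : 0 < lam) (k : ℕ) {s : ℂ} (hs : 0 < s.re) :
    HasDerivAt (mellin (wfun lam k)) (mellin (wfun lam (k + 1)) s) s := by
  have h := (mellin_hasDerivAt_of_isBigO_rpow (wfun_locInt lam k)
    (wfun_bigO_top k hlam (s.re + 1)) (lt_add_one _)
    (wfun_bigO_zero k hlam (half_pos hs)) (half_lt_self hs)).2
  have e : (fun t : ℝ => Real.log t • wfun lam k t) = wfun lam (k + 1) := by
    funext t
    rw [Complex.real_smul, wfun, wfun, pow_succ]
    ring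
  rw [e] at h
  exact h

lemma mellin_wfun_eq_gamma {lam : ℝ} (hlam : 0 < lam) {s : ℂ} (hs : 0 < s.re) :
    mellin (wfun lam 0) s = Complex.Gamma s * (lam : ℂ) ^ (-s) := by
  have h0 : mellin (wfun lam 0) s
      = ∫ t : ℝ in Ioi 0, (t : ℂ) ^ (s - 1) * Complex.exp (-((lam : ℝ) * t)) := by
    simp only [mellin, wfun, pow_zero, one_mul, smul_eq_mul]
    congr 1; funext t; push_cast; ring_nf
  rw [h0, Complex.integral_cpow_mul_exp_neg_mul_Ioi hs hlam]
  rw [one_div, Complex.inv_cpow _ _ (by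
    rw [Complex.arg_ofReal_of_nonneg hlam.le]; exact Real.pi_ne_zero.symm),
    ← Complex.cpow_neg, mul_comm]

lemma isOpen_repos : IsOpen {s : ℂ | 0 < s.re} := isOpen_lt continuous_const Complex.continuous_re

lemma iteratedDeriv_mellin_wfun {lam : ℝ} (hlam : 0 < lam) (n : ℕ) :
    ∀ {s : ℂ}, 0 < s.re → iteratedDeriv n (mellin (wfun lam 0)) s = mellin (wfun lam n) s := by
  induction n with
  | zero => intro s _; simp
  | succ n IH =>
    intro s hs
    rw [iteratedDeriv_succ]
    have hev : iteratedDeriv n (mellin (wfun lam 0)) =ᶠ[𝓝 s] mellin (wfun lam n) := by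
      filter_upwards [isOpen_repos.mem_nhds hs] with z hz
      exact IH hz
    rw [hev.deriv_eq]
    exact (wfun_hasDerivAt hlam n hs).deriv

lemma iteratedDeriv_congr_nhds {f g : ℂ → ℂ} {x : ℂ} (n : ℕ) (h : f =ᶠ[𝓝 x] g) :
    iteratedDeriv n f x = iteratedDeriv n g x := by
  have : iteratedDeriv n f =ᶠ[𝓝 x] iteratedDeriv n g := by
    induction n with
    | zero => simpa using h
    | succ n IH => simpa only [iteratedDeriv_succ] using IH.deriv
  exact this.eq_of_nhds

lemma iteratedDeriv_gamma_eq {lam : ℝ} (hlam : 0 < lam) (n : ℕ) {c : ℝ} (hc : -1 < c) :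
    iteratedDeriv n (fun a : ℂ => Complex.Gamma (a + 1) * (lam : ℂ) ^ (-(a + 1))) (c : ℂ)
      = mellin (wfun lam n) ((c : ℂ) + 1) := by
  have h2 : iteratedDeriv n (fun a : ℂ => Complex.Gamma (a + 1) * (lam : ℂ) ^ (-(a + 1)))
      (c : ℂ) = iteratedDeriv n (fun s : ℂ => Complex.Gamma s * (lam : ℂ) ^ (-s))
        ((c : ℂ) + 1) :=
    congrFun (iteratedDeriv_comp_add_const n
      (fun s : ℂ => Complex.Gamma s * (lam : ℂ) ^ (-s)) 1) (c : ℂ)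
  rw [h2]
  have hre : 0 < ((c : ℂ) + 1).re := by simp; linarith
  have hev : (fun s : ℂ => Complex.Gamma s * (lam : ℂ) ^ (-s))
      =ᶠ[𝓝 ((c : ℂ) + 1)] mellin (wfun lam 0) := by
    filter_upwards [isOpen_repos.mem_nhds hre] with z hz
    exact (mellin_wfun_eq_gamma hlam hz).symm
  rw [iteratedDeriv_congr_nhds n hev, iteratedDeriv_mellin_wfun hlam n hre]

lemma mellin_wfun_integral (lam : ℝ) (n : ℕ) (c : ℝ) :
    mellin (wfun lam n) ((c : ℂ) + 1)
      = ∫ t : ℝ in Ioi 0, Complex.exp (-(lam : ℂ) * t) * ((t ^ c : ℝ) : ℂ)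
          * (Real.log t : ℂ) ^ n := by
  simp only [mellin, smul_eq_mul, add_sub_cancel_right]
  refine setIntegral_congr_fun measurableSet_Ioi fun t ht => ?_
  rw [Complex.ofReal_cpow (le_of_lt ht), wfun]
  push_cast
  ring

lemma term_integrable {lam : ℝ} (hlam : 0 < lam) (n : ℕ) {c : ℝ} (hc : -1 < c) :
    IntegrableOn (fun t : ℝ => Complex.exp (-(lam : ℂ) * t) * ((t ^ c : ℝ) : ℂ)
      * (Real.log t : ℂ) ^ n) (Ioi 0) := by
  have hre : 0 < ((c : ℂ) + 1).re := by simp; linarith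
  have h := wfun_mellinConv hlam n (s := (c : ℂ) + 1) hre
  refine IntegrableOn.congr_fun h ?_ measurableSet_Ioi
  intro t ht
  simp only [smul_eq_mul, add_sub_cancel_right]
  rw [Complex.ofReal_cpow (le_of_lt ht), wfun]
  push_cast
  ring

lemma real_term_integrable {lam : ℝ} (hlam : 0 < lam) (n : ℕ) {c : ℝ} (hc : -1 < c) :
    IntegrableOn (fun t : ℝ => Real.exp (-(lam * t)) * t ^ c * |Real.log t| ^ n) (Ioi 0) := by
  have h := (term_integrable hlam n hc).norm
  refine IntegrableOn.congr_fun h ?_ measurableSet_Ioi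
  intro t ht
  simp only [norm_mul, norm_pow, Complex.norm_real, Real.norm_eq_abs, Complex.norm_exp]
  rw [abs_of_nonneg (Real.rpow_nonneg (le_of_lt ht) c)]
  congr 2
  simp [neg_mul]

lemma real_term_integrable' {lam : ℝ} (hlam : 0 < lam) (k : ℕ) {c : ℝ} (hc : -1 < c) :
    IntegrableOn (fun t : ℝ => Real.exp (-(lam * t)) * t ^ c * (|Real.log t| + 1) ^ k)
      (Ioi 0) := by
  have heq : (fun t : ℝ => Real.exp (-(lam * t)) * t ^ c * (|Real.log t| + 1) ^ k)
      = fun t : ℝ => ∑ i ∈ Finset.range (k + 1),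
          (k.choose i : ℝ) * (Real.exp (-(lam * t)) * t ^ c * |Real.log t| ^ i) := by
    funext t
    rw [add_pow, Finset.mul_sum]
    refine Finset.sum_congr rfl fun i _ => by ring
  rw [heq]
  exact integrable_finset_sum _ fun i _ =>
    ((real_term_integrable hlam i hc).const_mul _)

lemma near_bound {c : ℝ} (hc : -1 < c) (k : ℕ) : ∃ M : ℝ, 0 ≤ M ∧
    ∀ lam : ℝ, Real.exp 1 ≤ lam →
    (∫ t in Ioi (0:ℝ), Real.exp (-(lam * t)) * t ^ c * |Real.log t| ^ k)
      ≤ M * (lam ^ (-c - 1) * Real.log lam ^ k) := by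
  classical
  set g : ℝ → ℝ := fun u => Real.exp (-u) * u ^ c * (|Real.log u| + 1) ^ k with hg
  have hgint : IntegrableOn g (Ioi 0) := by
    have := real_term_integrable' one_pos k hc
    simpa [hg] using this
  set M : ℝ := ∫ u in Ioi (0:ℝ), g u with hM
  have hM0 : 0 ≤ M := by
    refine setIntegral_nonneg measurableSet_Ioi fun u hu => ?_
    have : (0:ℝ) < u := hu
    positivity
  refine ⟨M, hM0, fun lam hlam => ?_⟩
  have h1 : (1:ℝ) < Real.exp 1 := by
    have := Real.exp_one_gt_d9; linarith
  have hlam1 : 1 ≤ lam := le_trans h1.le hlam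
  have hlam0 : 0 < lam := lt_of_lt_of_le one_pos hlam1
  have hlog1 : 1 ≤ Real.log lam := by
    rw [← Real.log_exp 1]
    exact Real.log_le_log (Real.exp_pos 1) hlam
  have hlogpos : (0:ℝ) < Real.log lam := lt_of_lt_of_le one_pos hlog1
  have hcomp : IntegrableOn (fun t : ℝ => g (lam * t)) (Ioi 0) := by
    rw [integrableOn_Ioi_comp_mul_left_iff g 0 hlam0, mul_zero]
    exact hgint
  -- pointwise bound
  have hpt : ∀ t : ℝ, t ∈ Ioi (0:ℝ) →
      Real.exp (-(lam * t)) * t ^ c * |Real.log t| ^ k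
        ≤ lam ^ (-c) * Real.log lam ^ k * g (lam * t) := by
    intro t ht
    have ht0 : (0:ℝ) < t := ht
    have hlt : (0:ℝ) < lam * t := by positivity
    have hlogmul : Real.log (lam * t) = Real.log lam + Real.log t :=
      Real.log_mul hlam0.ne' ht0.ne'
    have hlogle : |Real.log t| ≤ Real.log lam * (|Real.log (lam * t)| + 1) := by
      have h2 : |Real.log t| ≤ |Real.log (lam * t)| + Real.log lam := by
        have := abs_sub_abs_le_abs_sub (Real.log (lam * t)) (Real.log lam)
        have h3 : |Real.log t| = |Real.log (lam * t) - Real.log lam| := by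
          rw [hlogmul]; ring_nf
        rw [h3]
        calc |Real.log (lam * t) - Real.log lam|
            ≤ |Real.log (lam * t)| + |Real.log lam| := abs_sub _ _
          _ = |Real.log (lam * t)| + Real.log lam := by rw [abs_of_pos hlogpos]
      nlinarith [abs_nonneg (Real.log (lam * t))]
    have hpow : |Real.log t| ^ k ≤ Real.log lam ^ k * (|Real.log (lam * t)| + 1) ^ k := by
      rw [← mul_pow]
      exact pow_le_pow_left₀ (abs_nonneg _) hlogle k
    have hrpow : t ^ c = lam ^ (-c) * (lam * t) ^ c := by
      rw [Real.mul_rpow hlam0.le ht0.le, ← mul_assoc, ← Real.rpow_add hlam0]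
      simp
    rw [hg]
    have hexp : Real.exp (-(lam * t)) = Real.exp (-(lam * t)) := rfl
    calc Real.exp (-(lam * t)) * t ^ c * |Real.log t| ^ k
        = lam ^ (-c) * (Real.exp (-(lam * t)) * (lam * t) ^ c * |Real.log t| ^ k) := by
          rw [hrpow]; ring
      _ ≤ lam ^ (-c) * (Real.exp (-(lam * t)) * (lam * t) ^ c
            * (Real.log lam ^ k * (|Real.log (lam * t)| + 1) ^ k)) := by
          apply mul_le_mul_of_nonneg_left _ (Real.rpow_nonneg hlam0.le _)
          apply mul_le_mul_of_nonneg_left hpow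
          positivity
      _ = lam ^ (-c) * Real.log lam ^ k
            * (Real.exp (-(lam * t)) * (lam * t) ^ c * (|Real.log (lam * t)| + 1) ^ k) := by
          ring
  -- integrate
  have hmono : (∫ t in Ioi (0:ℝ), Real.exp (-(lam * t)) * t ^ c * |Real.log t| ^ k)
      ≤ ∫ t in Ioi (0:ℝ), lam ^ (-c) * Real.log lam ^ k * g (lam * t) := by
    refine integral_mono_of_nonneg ?_ ((hcomp.const_mul _)) ?_
    · refine (ae_restrict_iff' measurableSet_Ioi).2 (ae_of_all _ fun t ht => ?_)
      have : (0:ℝ) < t := ht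
      positivity
    · exact (ae_restrict_iff' measurableSet_Ioi).2 (ae_of_all _ hpt)
  have hsub : (∫ t in Ioi (0:ℝ), g (lam * t)) = lam⁻¹ * M := by
    have := integral_comp_mul_left_Ioi g 0 hlam0
    rw [mul_zero] at this
    rw [this, smul_eq_mul]
  calc (∫ t in Ioi (0:ℝ), Real.exp (-(lam * t)) * t ^ c * |Real.log t| ^ k)
      ≤ ∫ t in Ioi (0:ℝ), lam ^ (-c) * Real.log lam ^ k * g (lam * t) := hmono
    _ = lam ^ (-c) * Real.log lam ^ k * (lam⁻¹ * M) := by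
        rw [integral_const_mul, hsub]
    _ = M * (lam ^ (-c - 1) * Real.log lam ^ k) := by
        rw [show (-c - 1 : ℝ) = -c + (-1) by ring, Real.rpow_add hlam0,
          Real.rpow_neg_one]
        ring

lemma cexp_norm (lam t : ℝ) : ‖Complex.exp (-(lam : ℂ) * t)‖ = Real.exp (-(lam * t)) := by
  have h : (-(lam : ℂ) * t) = ((-(lam * t) : ℝ) : ℂ) := by push_cast; ring
  rw [h, Complex.norm_exp, Complex.ofReal_re]

theorem statement10 (B : ℝ → ℂ) (hmeas : Measurable B)
    (hint : ∀ lam : ℝ, 0 < lam →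
      MeasureTheory.IntegrableOn (fun t : ℝ => Complex.exp (-(lam : ℂ) * (t : ℂ)) * B t)
        (Set.Ioi 0))
    (α : ℕ → ℝ) (hmono : StrictMono α) (hα0 : -1 < α 0)
    (β : ℕ → ℕ) (b : ℕ → ℂ)
    (hasymp : ∀ N : ℕ, ∃ CN : ℝ, 0 < CN ∧ ∃ δN : ℝ, 0 < δN ∧
      ∀ t : ℝ, 0 < t → t < δN →
        ‖B t - ∑ j ∈ Finset.range N,
            b j * ((t ^ (α j) : ℝ) : ℂ) * ((Real.log t : ℂ)) ^ (β j)‖ ≤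
          CN * t ^ (α N) * |Real.log t| ^ (β N)) :
    ∀ N : ℕ,
      (fun lam : ℝ =>
          (∫ t in Set.Ioi (0 : ℝ), Complex.exp (-(lam : ℂ) * (t : ℂ)) * B t) -
            ∑ j ∈ Finset.range N,
              b j * iteratedDeriv (β j)
                (fun a : ℂ => Complex.Gamma (a + 1) * (lam : ℂ) ^ (-(a + 1))) ((α j : ℂ)))
        =O[Filter.atTop] fun lam : ℝ => lam ^ (-(α N) - 1) * (Real.log lam) ^ (β N) := by
  intro N
  have hαj : ∀ j, -1 < α j := fun j => lt_of_lt_of_le hα0 (hmono.monotone (Nat.zero_le j))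
  obtain ⟨C, hC, δ, hδ, hbound⟩ := hasymp N
  set R : ℝ → ℂ := fun t => B t - ∑ j ∈ Finset.range N,
    b j * ((t ^ (α j) : ℝ) : ℂ) * (Real.log t : ℂ) ^ (β j) with hRdef
  -- integrability of each summand and of R against the exponential
  have hsumint : ∀ lam : ℝ, 0 < lam → IntegrableOn
      (fun t : ℝ => ∑ j ∈ Finset.range N, Complex.exp (-(lam : ℂ) * t) *
        (b j * ((t ^ (α j) : ℝ) : ℂ) * (Real.log t : ℂ) ^ (β j))) (Ioi 0) := by
    intro lam hlam
    refine integrable_finset_sum _ fun j _ => ?_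
    have h := (term_integrable hlam (β j) (hαj j)).const_mul (b j)
    refine IntegrableOn.congr_fun h (fun t ht => ?_) measurableSet_Ioi
    ring
  have hRint : ∀ lam : ℝ, 0 < lam →
      IntegrableOn (fun t : ℝ => Complex.exp (-(lam : ℂ) * t) * R t) (Ioi 0) := by
    intro lam hlam
    have h := (hint lam hlam).sub (hsumint lam hlam)
    refine IntegrableOn.congr_fun h (fun t ht => ?_) measurableSet_Ioi
    simp only [Pi.sub_apply, hRdef, mul_sub, Finset.mul_sum]
  -- identity
  have hEq : ∀ lam : ℝ, 0 < lam →
      ((∫ t in Ioi (0:ℝ), Complex.exp (-(lam : ℂ) * t) * B t) -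
        ∑ j ∈ Finset.range N, b j * iteratedDeriv (β j)
          (fun a : ℂ => Complex.Gamma (a + 1) * (lam : ℂ) ^ (-(a + 1))) ((α j : ℂ)))
      = ∫ t in Ioi (0:ℝ), Complex.exp (-(lam : ℂ) * t) * R t := by
    intro lam hlam
    have hterm : ∀ j ∈ Finset.range N,
        b j * iteratedDeriv (β j)
          (fun a : ℂ => Complex.Gamma (a + 1) * (lam : ℂ) ^ (-(a + 1))) ((α j : ℂ))
        = ∫ t in Ioi (0:ℝ), Complex.exp (-(lam : ℂ) * t) *
            (b j * ((t ^ (α j) : ℝ) : ℂ) * (Real.log t : ℂ) ^ (β j)) := by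
      intro j _
      rw [iteratedDeriv_gamma_eq hlam (β j) (hαj j), mellin_wfun_integral lam (β j) (α j),
        ← integral_const_mul]
      refine setIntegral_congr_fun measurableSet_Ioi fun t ht => ?_
      ring
    rw [Finset.sum_congr rfl hterm, ← integral_finset_sum _ (by
      refine fun j _ => ?_
      have h := (term_integrable hlam (β j) (hαj j)).const_mul (b j)
      refine IntegrableOn.congr_fun h (fun t ht => ?_) measurableSet_Ioi
      ring),
      ← integral_sub (hint lam hlam) (hsumint lam hlam)]
    refine setIntegral_congr_fun measurableSet_Ioi fun t ht => ?_
    simp only [Pi.sub_apply, hRdef, mul_sub, Finset.mul_sum]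
  -- constants
  obtain ⟨M, hM0, hMbound⟩ := near_bound (hαj N) (β N)
  set K : ℝ := ∫ t in Ici δ, Real.exp (-t) * ‖R t‖ with hK
  have hKint : IntegrableOn (fun t : ℝ => Real.exp (-t) * ‖R t‖) (Ici δ) := by
    have h := IntegrableOn.mono_set ((hRint 1 one_pos).norm) (Ici_subset_Ioi.mpr hδ)
    refine h.congr_fun (fun t ht => ?_) measurableSet_Ici
    beta_reduce
    rw [norm_mul, cexp_norm, one_mul]
  have hK0 : 0 ≤ K := setIntegral_nonneg measurableSet_Ici fun t ht => by positivity
  -- main eventual bound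
  have hmain : ∀ lam : ℝ, Real.exp 1 ≤ lam →
      ‖∫ t in Ioi (0:ℝ), Complex.exp (-(lam : ℂ) * t) * R t‖
        ≤ C * M * (lam ^ (-(α N) - 1) * Real.log lam ^ (β N))
          + (K * Real.exp δ) * Real.exp (-δ * lam) := by
    intro lam hlam
    have h1 : (1:ℝ) < Real.exp 1 := by have := Real.exp_one_gt_d9; linarith
    have hlam1 : 1 ≤ lam := le_trans h1.le hlam
    have hlam0 : 0 < lam := lt_of_lt_of_le one_pos hlam1
    have hnorm1 : ‖∫ t in Ioi (0:ℝ), Complex.exp (-(lam : ℂ) * t) * R t‖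
        ≤ ∫ t in Ioi (0:ℝ), Real.exp (-(lam * t)) * ‖R t‖ := by
      refine (norm_integral_le_integral_norm _).trans_eq ?_
      refine setIntegral_congr_fun measurableSet_Ioi fun t ht => ?_
      rw [norm_mul, cexp_norm]
    have hsplit : (∫ t in Ioi (0:ℝ), Real.exp (-(lam * t)) * ‖R t‖)
        = (∫ t in Ioo (0:ℝ) δ, Real.exp (-(lam * t)) * ‖R t‖)
          + ∫ t in Ici δ, Real.exp (-(lam * t)) * ‖R t‖ := by
      rw [← setIntegral_union (by
          refine disjoint_left.mpr fun x hx hx' => absurd hx' (not_le.mpr hx.2))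
        measurableSet_Ici ?_ ?_, Ioo_union_Ici_eq_Ioi hδ]
      · refine IntegrableOn.congr_fun (IntegrableOn.mono_set ((hRint lam hlam0).norm)
          Ioo_subset_Ioi_self) (fun t ht => ?_) measurableSet_Ioo
        rw [norm_mul, cexp_norm]
      · refine IntegrableOn.congr_fun (IntegrableOn.mono_set ((hRint lam hlam0).norm)
          (Ici_subset_Ioi.mpr hδ)) (fun t ht => ?_) measurableSet_Ici
        rw [norm_mul, cexp_norm]
    -- near piece
    have hnear : (∫ t in Ioo (0:ℝ) δ, Real.exp (-(lam * t)) * ‖R t‖)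
        ≤ C * M * (lam ^ (-(α N) - 1) * Real.log lam ^ (β N)) := by
      have hstep1 : (∫ t in Ioo (0:ℝ) δ, Real.exp (-(lam * t)) * ‖R t‖)
          ≤ ∫ t in Ioo (0:ℝ) δ, C * (Real.exp (-(lam * t)) * t ^ (α N)
              * |Real.log t| ^ (β N)) := by
        refine integral_mono_of_nonneg ?_
          ((IntegrableOn.mono_set (real_term_integrable hlam0 (β N) (hαj N))
            Ioo_subset_Ioi_self).const_mul C) ?_
        · refine (ae_restrict_iff' measurableSet_Ioo).2 (ae_of_all _ fun t ht => by
            positivity)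
        · refine (ae_restrict_iff' measurableSet_Ioo).2 (ae_of_all _ fun t ht => ?_)
          have h2 := hbound t ht.1 ht.2
          have h3 : Real.exp (-(lam * t)) * ‖R t‖
              ≤ Real.exp (-(lam * t)) * (C * t ^ (α N) * |Real.log t| ^ (β N)) :=
            mul_le_mul_of_nonneg_left h2 (Real.exp_nonneg _)
          calc Real.exp (-(lam * t)) * ‖R t‖
              ≤ Real.exp (-(lam * t)) * (C * t ^ (α N) * |Real.log t| ^ (β N)) := h3
            _ = C * (Real.exp (-(lam * t)) * t ^ (α N) * |Real.log t| ^ (β N)) := by ring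
      have hstep2 : (∫ t in Ioo (0:ℝ) δ, C * (Real.exp (-(lam * t)) * t ^ (α N)
            * |Real.log t| ^ (β N)))
          ≤ C * ∫ t in Ioi (0:ℝ), Real.exp (-(lam * t)) * t ^ (α N)
              * |Real.log t| ^ (β N) := by
        rw [integral_const_mul]
        refine mul_le_mul_of_nonneg_left ?_ hC.le
        refine setIntegral_mono_set (real_term_integrable hlam0 (β N) (hαj N)) ?_ ?_
        · refine (ae_restrict_iff' measurableSet_Ioi).2 (ae_of_all _ fun t ht => by
            have : (0:ℝ) < t := ht
            positivity)
        · exact HasSubset.Subset.eventuallyLE Ioo_subset_Ioi_self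
      have hstep3 := hMbound lam hlam
      calc (∫ t in Ioo (0:ℝ) δ, Real.exp (-(lam * t)) * ‖R t‖)
          ≤ _ := hstep1
        _ ≤ C * ∫ t in Ioi (0:ℝ), Real.exp (-(lam * t)) * t ^ (α N)
              * |Real.log t| ^ (β N) := hstep2
        _ ≤ C * (M * (lam ^ (-(α N) - 1) * Real.log lam ^ (β N))) :=
            mul_le_mul_of_nonneg_left hstep3 hC.le
        _ = C * M * (lam ^ (-(α N) - 1) * Real.log lam ^ (β N)) := by ring
    -- tail piece
    have htail : (∫ t in Ici δ, Real.exp (-(lam * t)) * ‖R t‖)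
        ≤ (K * Real.exp δ) * Real.exp (-δ * lam) := by
      have hstep1 : (∫ t in Ici δ, Real.exp (-(lam * t)) * ‖R t‖)
          ≤ ∫ t in Ici δ, Real.exp (-(lam - 1) * δ) * (Real.exp (-t) * ‖R t‖) := by
        refine integral_mono_of_nonneg ?_ (hKint.const_mul _) ?_
        · exact (ae_restrict_iff' measurableSet_Ici).2 (ae_of_all _ fun t ht => by
            positivity)
        · refine (ae_restrict_iff' measurableSet_Ici).2 (ae_of_all _ fun t ht => ?_)
          have ht' : δ ≤ t := ht
          have h4 : Real.exp (-(lam * t)) = Real.exp (-(lam - 1) * t) * Real.exp (-t) := by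
            rw [← Real.exp_add]; ring_nf
          have h5 : Real.exp (-(lam - 1) * t) ≤ Real.exp (-(lam - 1) * δ) := by
            apply Real.exp_le_exp.2
            have : (0:ℝ) ≤ lam - 1 := by linarith
            nlinarith
          calc Real.exp (-(lam * t)) * ‖R t‖
              = Real.exp (-(lam - 1) * t) * (Real.exp (-t) * ‖R t‖) := by rw [h4]; ring
            _ ≤ Real.exp (-(lam - 1) * δ) * (Real.exp (-t) * ‖R t‖) := by
                refine mul_le_mul_of_nonneg_right h5 (by positivity)
      have hstep2 : (∫ t in Ici δ, Real.exp (-(lam - 1) * δ) * (Real.exp (-t) * ‖R t‖))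
          = Real.exp (-(lam - 1) * δ) * K := by rw [integral_const_mul]
      have hstep3 : Real.exp (-(lam - 1) * δ) * K = (K * Real.exp δ) * Real.exp (-δ * lam) := by
        rw [show (-(lam - 1) * δ) = δ + (-δ * lam) by ring, Real.exp_add]
        ring
      rw [hstep2, hstep3] at hstep1
      exact hstep1
    calc ‖∫ t in Ioi (0:ℝ), Complex.exp (-(lam : ℂ) * t) * R t‖
        ≤ ∫ t in Ioi (0:ℝ), Real.exp (-(lam * t)) * ‖R t‖ := hnorm1
      _ = _ := hsplit
      _ ≤ _ := add_le_add hnear htail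
  -- conclude with asymptotics
  have hφ : (fun lam : ℝ => C * M * (lam ^ (-(α N) - 1) * Real.log lam ^ (β N))
        + (K * Real.exp δ) * Real.exp (-δ * lam))
      =O[atTop] fun lam : ℝ => lam ^ (-(α N) - 1) * Real.log lam ^ (β N) := by
    refine IsBigO.add ?_ ?_
    · exact (isBigO_refl _ _).const_mul_left _
    · have h2 : (fun lam : ℝ => (K * Real.exp δ) * Real.exp (-δ * lam)) =O[atTop]
          (fun lam : ℝ => lam ^ (-(α N) - 1)) :=
        (isLittleO_exp_neg_mul_rpow_atTop hδ (-(α N) - 1)).isBigO.const_mul_left _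
      refine h2.trans ?_
      rw [isBigO_iff]
      refine ⟨1, ?_⟩
      filter_upwards [eventually_ge_atTop (Real.exp 1)] with lam hlam
      have h1 : (1:ℝ) < Real.exp 1 := by have := Real.exp_one_gt_d9; linarith
      have hlam1 : 1 ≤ lam := le_trans h1.le hlam
      have hlam0 : 0 < lam := lt_of_lt_of_le one_pos hlam1
      have hlog1 : 1 ≤ Real.log lam := by
        rw [← Real.log_exp 1]
        exact Real.log_le_log (Real.exp_pos 1) hlam
      have hp : (0:ℝ) ≤ lam ^ (-(α N) - 1) := Real.rpow_nonneg hlam0.le _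
      rw [one_mul, Real.norm_eq_abs, Real.norm_eq_abs, abs_of_nonneg hp,
        abs_of_nonneg (by positivity)]
      nlinarith [one_le_pow₀ hlog1 (n := β N), pow_nonneg (le_trans zero_le_one hlog1) (β N)]
  refine IsBigO.trans ?_ hφ
  rw [isBigO_iff]
  refine ⟨1, ?_⟩
  filter_upwards [eventually_ge_atTop (Real.exp 1)] with lam hlam
  have h1 : (1:ℝ) < Real.exp 1 := by have := Real.exp_one_gt_d9; linarith
  have hlam0 : 0 < lam := lt_of_lt_of_le one_pos (le_trans h1.le hlam)
  rw [hEq lam hlam0, one_mul]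
  refine (hmain lam hlam).trans (le_abs_self _)
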